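/- Let φ : ℝ^d → ℝ be a nonnegative C¹ function and C_φ ≥ 0 a constant such that |∇φ(x)| ≤ C_φ φ(x) for all x. Then for every x, z ∈ ℝ^d and every 0 < p < ∞, |φ(x+z)^{1/p} − φ(x)^{1/p}| ≤ w_{p,φ}(|z|) φ(x)^{1/p}, where w_{p,φ}(r) = (C_φ/p) r (1 + (C_φ/p) r e^{C_φ r / p}). -/

import Mathlib

open Real MeasureTheory

lemma gronwall_aux {d : ℕ} (φ : EuclideanSpace ℝ (Fin d) → ℝ) (Cφ : ℝ)
    (hφC1 : ContDiff ℝ 1 φ)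
    (hgrad : ∀ x, ‖fderiv ℝ φ x‖ ≤ Cφ * φ x)
    (x z : EuclideanSpace ℝ (Fin d)) :
    φ (x + z) ≤ φ x * Real.exp (Cφ * ‖z‖) := by
  set c : ℝ := Cφ * ‖z‖ with hc
  set F : ℝ → ℝ := fun t => φ (x + t • z) * Real.exp (-(c * t)) with hF
  have hdiff : ∀ t : ℝ, HasDerivAt F
      ((fderiv ℝ φ (x + t • z)) z * Real.exp (-(c * t))
        + φ (x + t • z) * (Real.exp (-(c * t)) * -(c * 1))) t := by
    intro t
    have h1 : HasDerivAt (fun t : ℝ => x + t • z) ((1:ℝ) • z) t :=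
      ((hasDerivAt_id t).smul_const z).const_add x
    have h2 : HasFDerivAt φ (fderiv ℝ φ (x + t • z)) (x + t • z) :=
      (hφC1.differentiable one_ne_zero (x + t • z)).hasFDerivAt
    have h3 := h2.comp_hasDerivAt t h1
    simp only [one_smul] at h3
    have h4 : HasDerivAt (fun t : ℝ => Real.exp (-(c * t)))
        (Real.exp (-(c * t)) * -(c * 1)) t :=
      (((hasDerivAt_id t).const_mul c).neg).exp
    exact h3.mul h4
  have hanti : Antitone F := by
    apply antitone_of_deriv_nonpos
    · intro t; exact (hdiff t).differentiableAt
    · intro t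
      rw [(hdiff t).deriv]
      have hE : 0 < Real.exp (-(c * t)) := Real.exp_pos _
      have hb : (fderiv ℝ φ (x + t • z)) z ≤ c * φ (x + t • z) := by
        calc (fderiv ℝ φ (x + t • z)) z ≤ ‖(fderiv ℝ φ (x + t • z)) z‖ := le_abs_self _
          _ ≤ ‖fderiv ℝ φ (x + t • z)‖ * ‖z‖ := (fderiv ℝ φ (x + t • z)).le_opNorm z
          _ ≤ (Cφ * φ (x + t • z)) * ‖z‖ := by
              apply mul_le_mul_of_nonneg_right (hgrad _) (norm_nonneg z)
          _ = c * φ (x + t • z) := by ring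
      nlinarith
  have h01 := hanti (show (0:ℝ) ≤ 1 by norm_num)
  simp only [hF, one_smul, zero_smul, add_zero, mul_zero, neg_zero, Real.exp_zero, mul_one] at h01
  have hE : 0 < Real.exp (-(c * 1)) := Real.exp_pos _
  have := mul_le_mul_of_nonneg_right h01 (le_of_lt (Real.exp_pos c))
  rw [mul_assoc, ← Real.exp_add] at this
  simpa using this

/-- weighted-norm weight regularity estimate
`|φ(x+z)^{1/p} − φ(x)^{1/p}| ≤ w_{p,φ}(|z|) φ(x)^{1/p}`,
where `w_{p,φ}(r) = (C_φ/p) r (1 + (C_φ/p) r e^{C_φ r / p})`. -/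
theorem stmt_0 {d : ℕ} (φ : EuclideanSpace ℝ (Fin d) → ℝ) (Cφ : ℝ) (hCφ : 0 ≤ Cφ)
    (hφ0 : ∀ x, 0 ≤ φ x) (hφC1 : ContDiff ℝ 1 φ)
    (hgrad : ∀ x, ‖fderiv ℝ φ x‖ ≤ Cφ * φ x)
    (p : ℝ) (hp : 0 < p) (x z : EuclideanSpace ℝ (Fin d)) :
    |φ (x + z) ^ (1 / p) - φ x ^ (1 / p)| ≤
      (Cφ / p) * ‖z‖ * (1 + (Cφ / p) * ‖z‖ * Real.exp (Cφ * ‖z‖ / p)) * φ x ^ (1 / p) := by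
  set a : ℝ := φ x with ha
  set b : ℝ := φ (x + z) with hb
  have hub : b ≤ a * Real.exp (Cφ * ‖z‖) := gronwall_aux φ Cφ hφC1 hgrad x z
  have hlb : a ≤ b * Real.exp (Cφ * ‖z‖) := by
    have := gronwall_aux φ Cφ hφC1 hgrad (x + z) (-z)
    simpa [ha, hb] using this
  set s : ℝ := Cφ * ‖z‖ / p with hs
  have hs0 : 0 ≤ s := by positivity
  have hes : Real.exp s * Real.exp (-s) = 1 := by rw [← Real.exp_add]; simp
  have hkey : Real.exp s - 1 ≤ s + s ^ 2 * Real.exp s := by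
    have h1 : 1 - s ≤ Real.exp (-s) := by linarith [Real.add_one_le_exp (-s)]
    nlinarith [Real.exp_pos s, Real.exp_pos (-s)]
  have ha0 : 0 ≤ a := hφ0 x
  have hb0 : 0 ≤ b := hφ0 _
  have hrhs : (Cφ / p) * ‖z‖ * (1 + (Cφ / p) * ‖z‖ * Real.exp (Cφ * ‖z‖ / p)) * a ^ (1/p)
      = (s + s ^ 2 * Real.exp s) * a ^ (1/p) := by
    rw [hs]; ring
  rw [hrhs]
  rcases eq_or_lt_of_le ha0 with h0 | hapos
  · -- a = 0, hence b = 0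
    have hbz : b = 0 := le_antisymm (by simpa [← h0] using hub) hb0
    simp [← h0, hbz, Real.zero_rpow (by positivity : (1:ℝ)/p ≠ 0),
      Real.zero_rpow (inv_ne_zero hp.ne')]
  · have hbpos : 0 < b := by nlinarith [Real.exp_pos (Cφ * ‖z‖)]
    have hexp : Real.exp (Cφ * ‖z‖) ^ (1/p) = Real.exp s := by
      rw [← Real.exp_mul, hs]; ring_nf
    have hub' : b ^ (1/p) ≤ a ^ (1/p) * Real.exp s := by
      calc b ^ (1/p) ≤ (a * Real.exp (Cφ * ‖z‖)) ^ (1/p) :=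
            Real.rpow_le_rpow hb0 hub (by positivity)
        _ = a ^ (1/p) * Real.exp s := by
            rw [Real.mul_rpow ha0 (Real.exp_pos _).le, hexp]
    have hlb' : a ^ (1/p) ≤ b ^ (1/p) * Real.exp s := by
      calc a ^ (1/p) ≤ (b * Real.exp (Cφ * ‖z‖)) ^ (1/p) :=
            Real.rpow_le_rpow ha0 hlb (by positivity)
        _ = b ^ (1/p) * Real.exp s := by
            rw [Real.mul_rpow hb0 (Real.exp_pos _).le, hexp]
    have haP : 0 < a ^ (1/p) := Real.rpow_pos_of_pos hapos _
    have hbP : 0 < b ^ (1/p) := Real.rpow_pos_of_pos hbpos _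
    rw [abs_le]
    constructor
    · -- a^(1/p) - b^(1/p) ≤ RHS : use b^(1/p) ≥ a^(1/p)/exp s ... use hlb'
      have h1 : a ^ (1/p) - b ^ (1/p) ≤ a ^ (1/p) * (1 - Real.exp (-s)) := by
        have : a ^ (1/p) * Real.exp (-s) ≤ b ^ (1/p) := by
          have := mul_le_mul_of_nonneg_right hlb' (Real.exp_pos (-s)).le
          rw [mul_assoc, hes, mul_one] at this
          exact this
        nlinarith
      have h2 : 1 - Real.exp (-s) ≤ s + s ^ 2 * Real.exp s := by
        have := Real.add_one_le_exp (-s)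
        nlinarith [Real.exp_pos s]
      nlinarith
    · have h1 : b ^ (1/p) - a ^ (1/p) ≤ a ^ (1/p) * (Real.exp s - 1) := by nlinarith
      nlinarith
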